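/- There is no FOC2 formula φ(x) such that for every finite star graph over binary predicates r1, r2 (with no unary predicates) and every node v, (G,v) ⊨ φ if and only if v has strictly more r1-neighbors than r2-neighbors. Indeed, any candidate φ with all counting thresholds at most m fails to distinguish the centers of the star graphs G(m) and H(m) described below, although the center of G(m) has more r1- than r2-neighbors and the center of H(m) does not. -/

import Mathlib

inductive Var : Type
  | x | y
deriving DecidableEq

structure FOCGraph (P1 P2 : Type) where
  V : Type
  [fintV : Fintype V]
  [decV : DecidableEq V]
  unary : P1 → V → Prop
  rel : P2 → V → V → Prop
  [decU : ∀ p, DecidablePred (unary p)]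
  [decR : ∀ r, DecidableRel (rel r)]

attribute [instance] FOCGraph.fintV FOCGraph.decV FOCGraph.decU FOCGraph.decR

inductive FOC2 (P1 P2 : Type) : Type
  | tru : FOC2 P1 P2
  | atom : P1 → Var → FOC2 P1 P2
  | rel : P2 → Var → Var → FOC2 P1 P2
  | and : FOC2 P1 P2 → FOC2 P1 P2 → FOC2 P1 P2
  | or : FOC2 P1 P2 → FOC2 P1 P2 → FOC2 P1 P2
  | not : FOC2 P1 P2 → FOC2 P1 P2
  | exge : ℕ → Var → FOC2 P1 P2 → FOC2 P1 P2

variable {P1 P2 : Type}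

/-- Satisfaction of a `FOC2` formula in a multi-relational graph under an assignment. -/
def FOCGraph.sat (G : FOCGraph P1 P2) : (Var → G.V) → FOC2 P1 P2 → Prop
  | _, .tru => True
  | σ, .atom p v => G.unary p (σ v)
  | σ, .rel r u w => G.rel r (σ u) (σ w)
  | σ, .and φ ψ => G.sat σ φ ∧ G.sat σ ψ
  | σ, .or φ ψ => G.sat σ φ ∨ G.sat σ ψ
  | σ, .not φ => ¬ G.sat σ φ
  | σ, .exge n v φ => ∃ S : Finset G.V, S.card = n ∧ ∀ a ∈ S, G.sat (Function.update σ v a) φ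

/-- Quantifier depth. -/
def FOC2.depth : FOC2 P1 P2 → ℕ
  | .tru => 0
  | .atom _ _ => 0
  | .rel _ _ _ => 0
  | .and φ ψ => max φ.depth ψ.depth
  | .or φ ψ => max φ.depth ψ.depth
  | .not φ => φ.depth
  | .exge _ _ φ => φ.depth + 1

/-- All counting thresholds are at most `m`. -/
def FOC2.thresholdsLe (m : ℕ) : FOC2 P1 P2 → Prop
  | .tru => True
  | .atom _ _ => True
  | .rel _ _ _ => True
  | .and φ ψ => φ.thresholdsLe m ∧ ψ.thresholdsLe m
  | .or φ ψ => φ.thresholdsLe m ∧ ψ.thresholdsLe m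
  | .not φ => φ.thresholdsLe m
  | .exge n _ φ => n ≤ m ∧ φ.thresholdsLe m

/-- Free variables. -/
def FOC2.freeVars : FOC2 P1 P2 → Finset Var
  | .tru => ∅
  | .atom _ v => {v}
  | .rel _ u w => {u, w}
  | .and φ ψ => φ.freeVars ∪ ψ.freeVars
  | .or φ ψ => φ.freeVars ∪ ψ.freeVars
  | .not φ => φ.freeVars
  | .exge _ v φ => φ.freeVars \ {v}

/-- Parse-tree size. -/
def FOC2.size : FOC2 P1 P2 → ℕ
  | .tru => 1
  | .atom _ _ => 1
  | .rel _ _ _ => 1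
  | .and φ ψ => φ.size + ψ.size + 1
  | .or φ ψ => φ.size + ψ.size + 1
  | .not φ => φ.size + 1
  | .exge _ _ φ => φ.size + 1


/-- `r`-edge predicate from the centre of a star with `p` r1-leaves (nodes `1..p`)
followed by r2-leaves (nodes `p+1..`). `r = true` is `r1`, `r = false` is `r2`. -/
def starEdge (p : ℕ) (r : Bool) (i : ℕ) : Prop :=
  (r = true ∧ 1 ≤ i ∧ i ≤ p) ∨ (r = false ∧ p + 1 ≤ i)

instance (p : ℕ) (r : Bool) (i : ℕ) : Decidable (starEdge p r i) := by
  unfold starEdge; infer_instance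

/-- Star graph: node `0` is the centre, nodes `1..p` are `r1`-leaves and
nodes `p+1..p+q` are `r2`-leaves; edges are symmetric. -/
def star (p q : ℕ) : FOCGraph Empty Bool where
  V := Fin (p + q + 1)
  unary := fun e _ => e.elim
  rel := fun r a b =>
    (a.val = 0 ∧ starEdge p r b.val) ∨ (b.val = 0 ∧ starEdge p r a.val)
  decU := fun e => e.elim
  decR := fun _ _ _ => by infer_instance

/-- The centre of a star graph. -/
def starCenter (p q : ℕ) : (star p q).V := ⟨0, Nat.succ_pos _⟩

/-- Number of `r`-neighbours of a node. -/
def nbrCount (G : FOCGraph Empty Bool) (r : Bool) (v : G.V) : ℕ :=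
  (Finset.univ.filter (fun u => G.rel r v u)).card

/-! ### Auxiliary machinery -/

/-- Node type in a star: 0 = centre, 1 = r1-leaf, 2 = r2-leaf. -/
def ty (p i : ℕ) : ℕ := if i = 0 then 0 else if i ≤ p then 1 else 2

lemma ty_eq_zero (p i : ℕ) : ty p i = 0 ↔ i = 0 := by
  unfold ty; split_ifs <;> simp_all

lemma ty_eq_one (p i : ℕ) : ty p i = 1 ↔ 1 ≤ i ∧ i ≤ p := by
  unfold ty; split_ifs <;> simp_all <;> omega

lemma ty_eq_two (p i : ℕ) : ty p i = 2 ↔ p + 1 ≤ i := by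
  unfold ty; split_ifs <;> simp_all <;> omega

lemma ty_cases (p i : ℕ) : ty p i = 0 ∨ ty p i = 1 ∨ ty p i = 2 := by
  unfold ty; split_ifs <;> simp

lemma starEdge_iff (p : ℕ) (r : Bool) (i : ℕ) :
    starEdge p r i ↔ ty p i = (if r then 1 else 2) := by
  cases r
  · simpa [starEdge] using (ty_eq_two p i).symm
  · simpa [starEdge] using (ty_eq_one p i).symm

lemma star_rel_iff (p q : ℕ) (r : Bool) (a b : (star p q).V) :
    (star p q).rel r a b ↔
      (ty p a.val = 0 ∧ ty p b.val = (if r then 1 else 2)) ∨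
      (ty p b.val = 0 ∧ ty p a.val = (if r then 1 else 2)) := by
  show (a.val = 0 ∧ starEdge p r b.val) ∨ (b.val = 0 ∧ starEdge p r a.val) ↔ _
  rw [starEdge_iff, starEdge_iff, ty_eq_zero p a.val, ty_eq_zero p b.val]

lemma sat_exge_iff (G : FOCGraph Empty Bool) (σ : Var → G.V) (n : ℕ) (v : Var)
    (φ : FOC2 Empty Bool) [DecidablePred fun a => G.sat (Function.update σ v a) φ] :
    G.sat σ (.exge n v φ) ↔
      n ≤ (Finset.univ.filter fun a => G.sat (Function.update σ v a) φ).card := by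
  constructor
  · rintro ⟨S, hS, hall⟩
    calc n = S.card := hS.symm
    _ ≤ _ := Finset.card_le_card
      (fun a ha => Finset.mem_filter.2 ⟨Finset.mem_univ a, hall a ha⟩)
  · intro h
    obtain ⟨t, ht, hcard⟩ := Finset.exists_subset_card_eq h
    exact ⟨t, hcard, fun a ha => (Finset.mem_filter.1 (ht ha)).2⟩

lemma card_ty_one (p q : ℕ) :
    (Finset.univ.filter fun u : Fin (p + q + 1) => ty p u.val = 1).card = p := by
  have h : ∀ x ∈ Finset.Icc 1 p, x < p + q + 1 := by
    intro x hx; rw [Finset.mem_Icc] at hx; omega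
  have e : (Finset.univ.filter fun u : Fin (p + q + 1) => ty p u.val = 1)
      = (Finset.Icc 1 p).attachFin h := by
    ext u
    rw [Finset.mem_filter, Finset.mem_attachFin, Finset.mem_Icc, ty_eq_one]
    simp
  rw [e, Finset.card_attachFin, Nat.card_Icc]
  omega

lemma card_ty_two (p q : ℕ) :
    (Finset.univ.filter fun u : Fin (p + q + 1) => ty p u.val = 2).card = q := by
  have h : ∀ x ∈ Finset.Icc (p + 1) (p + q), x < p + q + 1 := by
    intro x hx; rw [Finset.mem_Icc] at hx; omega
  have e : (Finset.univ.filter fun u : Fin (p + q + 1) => ty p u.val = 2)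
      = (Finset.Icc (p + 1) (p + q)).attachFin h := by
    ext u
    rw [Finset.mem_filter, Finset.mem_attachFin, Finset.mem_Icc, ty_eq_two]
    have := u.isLt
    simp only [Finset.mem_univ, true_and]
    omega
  rw [e, Finset.card_attachFin, Nat.card_Icc]
  omega

lemma nbrCount_center_true (p q : ℕ) :
    nbrCount (star p q) true (starCenter p q) = p := by
  unfold nbrCount
  have h0 : ty p (starCenter p q).val = 0 := by rw [ty_eq_zero]; rfl
  have e : (Finset.univ.filter fun u => (star p q).rel true (starCenter p q) u)
      = Finset.univ.filter fun u : Fin (p + q + 1) => ty p u.val = 1 := by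
    ext u
    simp only [Finset.mem_filter, Finset.mem_univ, true_and, star_rel_iff]
    constructor
    · rintro (⟨-, h⟩ | ⟨-, h⟩)
      · exact Finset.mem_filter.2 ⟨Finset.mem_univ _, by simpa using h⟩
      · rw [h0] at h; simp at h
    · intro h; exact Or.inl ⟨h0, by simpa using (Finset.mem_filter.1 h).2⟩
  rw [e]; exact card_ty_one p q

lemma nbrCount_center_false (p q : ℕ) :
    nbrCount (star p q) false (starCenter p q) = q := by
  unfold nbrCount
  have h0 : ty p (starCenter p q).val = 0 := by rw [ty_eq_zero]; rfl
  have e : (Finset.univ.filter fun u => (star p q).rel false (starCenter p q) u)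
      = Finset.univ.filter fun u : Fin (p + q + 1) => ty p u.val = 2 := by
    ext u
    simp only [Finset.mem_filter, Finset.mem_univ, true_and, star_rel_iff]
    constructor
    · rintro (⟨-, h⟩ | ⟨-, h⟩)
      · exact Finset.mem_filter.2 ⟨Finset.mem_univ _, by simpa using h⟩
      · rw [h0] at h; simp at h
    · intro h; exact Or.inl ⟨h0, by simpa using (Finset.mem_filter.1 h).2⟩
  rw [e]; exact card_ty_two p q

lemma key (m : ℕ) : ∀ φ : FOC2 Empty Bool, φ.thresholdsLe m →
    ∀ p q p' q' : ℕ, m ≤ p → m ≤ q → m ≤ p' → m ≤ q' →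
    ∀ (σ : Var → (star p q).V) (τ : Var → (star p' q').V),
      (∀ v, ty p (σ v).val = ty p' (τ v).val) →
      ((star p q).sat σ φ ↔ (star p' q').sat τ φ) := by
  intro φ
  induction φ with
  | tru => intro _ p q p' q' _ _ _ _ σ τ _; simp [FOCGraph.sat]
  | atom e v => exact fun _ _ _ _ _ _ _ _ _ _ _ _ => e.elim
  | rel r u w =>
    intro _ p q p' q' _ _ _ _ σ τ h
    show (star p _).rel r (σ u) (σ w) ↔ (star p' _).rel r (τ u) (τ w)
    rw [star_rel_iff, star_rel_iff, h u, h w]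
  | and φ ψ ihφ ihψ =>
    intro hφ p q p' q' hp hq hp' hq' σ τ h
    exact and_congr (ihφ hφ.1 p q p' q' hp hq hp' hq' σ τ h)
      (ihψ hφ.2 p q p' q' hp hq hp' hq' σ τ h)
  | or φ ψ ihφ ihψ =>
    intro hφ p q p' q' hp hq hp' hq' σ τ h
    exact or_congr (ihφ hφ.1 p q p' q' hp hq hp' hq' σ τ h)
      (ihψ hφ.2 p q p' q' hp hq hp' hq' σ τ h)
  | not φ ih =>
    intro hφ p q p' q' hp hq hp' hq' σ τ h
    exact not_congr (ih hφ p q p' q' hp hq hp' hq' σ τ h)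
  | exge n v φ ih =>
    intro hφ p q p' q' hp hq hp' hq' σ τ h
    obtain ⟨hn, hφ'⟩ := hφ
    classical
    rw [sat_exge_iff, sat_exge_iff]
    rcases Nat.eq_zero_or_pos n with rfl | hn1
    · simp
    have hm1 : 1 ≤ m := le_trans hn1 hn
    have hC : ∀ (a : (star p q).V) (b : (star p' q').V), ty p a.val = ty p' b.val →
        ((star p q).sat (Function.update σ v a) φ ↔
          (star p' q').sat (Function.update τ v b) φ) := by
      intro a b hab
      refine ih hφ' p q p' q' hp hq hp' hq' _ _ ?_
      intro w
      rcases eq_or_ne w v with rfl | hw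
      · simpa using hab
      · simpa [Function.update_apply, hw] using h w
    have hMG : ∀ a b : (star p q).V, ty p a.val = ty p b.val →
        ((star p q).sat (Function.update σ v a) φ ↔
          (star p q).sat (Function.update σ v b) φ) := by
      intro a b hab
      refine ih hφ' p q p q hp hq hp hq _ _ ?_
      intro w
      rcases eq_or_ne w v with rfl | hw
      · simpa using hab
      · simp [Function.update_apply, hw]
    have hMH : ∀ a b : (star p' q').V, ty p' a.val = ty p' b.val →
        ((star p' q').sat (Function.update τ v a) φ ↔
          (star p' q').sat (Function.update τ v b) φ) := by
      intro a b hab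
      refine ih hφ' p' q' p' q' hp' hq' hp' hq' _ _ ?_
      intro w
      rcases eq_or_ne w v with rfl | hw
      · simpa using hab
      · simp [Function.update_apply, hw]
    set aC : (star p q).V := ⟨0, by omega⟩ with haC
    set a1 : (star p q).V := ⟨1, by omega⟩ with ha1
    set a2 : (star p q).V := ⟨p + 1, by omega⟩ with ha2
    set bC : (star p' q').V := ⟨0, by omega⟩ with hbC
    set b1 : (star p' q').V := ⟨1, by omega⟩ with hb1
    set b2 : (star p' q').V := ⟨p' + 1, by omega⟩ with hb2
    have tyaC : ty p aC.val = 0 := by rw [haC]; show ty p 0 = 0; rw [ty_eq_zero]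
    have tya1 : ty p a1.val = 1 := by rw [ha1]; show ty p 1 = 1; rw [ty_eq_one]; omega
    have tya2 : ty p a2.val = 2 := by rw [ha2]; show ty p (p + 1) = 2; rw [ty_eq_two]
    have tybC : ty p' bC.val = 0 := by rw [hbC]; show ty p' 0 = 0; rw [ty_eq_zero]
    have tyb1 : ty p' b1.val = 1 := by rw [hb1]; show ty p' 1 = 1; rw [ty_eq_one]; omega
    have tyb2 : ty p' b2.val = 2 := by rw [hb2]; show ty p' (p' + 1) = 2; rw [ty_eq_two]
    by_cases h1 : (star p q).sat (Function.update σ v a1) φ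
    · -- all r1-leaves work in both graphs; plenty of them
      have hle1 : p ≤ (Finset.univ.filter fun a =>
          (star p q).sat (Function.update σ v a) φ).card := by
        refine le_trans (le_of_eq (card_ty_one p q).symm) (Finset.card_le_card ?_)
        intro u hu
        simp only [Finset.mem_filter, Finset.mem_univ, true_and] at hu ⊢
        exact Finset.mem_filter.2 ⟨Finset.mem_univ _, (hMG a1 u (by rw [tya1, hu])).1 h1⟩
      have hQ1 : (star p' q').sat (Function.update τ v b1) φ :=
        (hC a1 b1 (by rw [tya1, tyb1])).1 h1
      have hle2 : p' ≤ (Finset.univ.filter fun a =>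
          (star p' q').sat (Function.update τ v a) φ).card := by
        refine le_trans (le_of_eq (card_ty_one p' q').symm) (Finset.card_le_card ?_)
        intro u hu
        simp only [Finset.mem_filter, Finset.mem_univ, true_and] at hu ⊢
        exact Finset.mem_filter.2 ⟨Finset.mem_univ _, (hMH b1 u (by rw [tyb1, hu])).1 hQ1⟩
      exact iff_of_true (le_trans (hn.trans hp) hle1) (le_trans (hn.trans hp') hle2)
    by_cases h2 : (star p q).sat (Function.update σ v a2) φ
    · have hle1 : q ≤ (Finset.univ.filter fun a =>
          (star p q).sat (Function.update σ v a) φ).card := by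
        refine le_trans (le_of_eq (card_ty_two p q).symm) (Finset.card_le_card ?_)
        intro u hu
        simp only [Finset.mem_filter, Finset.mem_univ, true_and] at hu ⊢
        exact Finset.mem_filter.2 ⟨Finset.mem_univ _, (hMG a2 u (by rw [tya2, hu])).1 h2⟩
      have hQ2 : (star p' q').sat (Function.update τ v b2) φ :=
        (hC a2 b2 (by rw [tya2, tyb2])).1 h2
      have hle2 : q' ≤ (Finset.univ.filter fun a =>
          (star p' q').sat (Function.update τ v a) φ).card := by
        refine le_trans (le_of_eq (card_ty_two p' q').symm) (Finset.card_le_card ?_)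
        intro u hu
        simp only [Finset.mem_filter, Finset.mem_univ, true_and] at hu ⊢
        exact Finset.mem_filter.2 ⟨Finset.mem_univ _, (hMH b2 u (by rw [tyb2, hu])).1 hQ2⟩
      exact iff_of_true (le_trans (hn.trans hq) hle1) (le_trans (hn.trans hq') hle2)
    -- only possibly the centre works
    have hsubP : (Finset.univ.filter fun a =>
        (star p q).sat (Function.update σ v a) φ) ⊆ {aC} := by
      intro u hu
      simp only [Finset.mem_filter, Finset.mem_univ, true_and] at hu
      rcases ty_cases p u.val with h0 | hA | hB
      · simp only [Finset.mem_singleton]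
        exact Fin.ext (by rw [ty_eq_zero] at h0; exact h0)
      · exact absurd ((hMG u a1 (by rw [hA, tya1])).1 hu) h1
      · exact absurd ((hMG u a2 (by rw [hB, tya2])).1 hu) h2
    have hsubQ : (Finset.univ.filter fun a =>
        (star p' q').sat (Function.update τ v a) φ) ⊆ {bC} := by
      intro u hu
      simp only [Finset.mem_filter, Finset.mem_univ, true_and] at hu
      rcases ty_cases p' u.val with h0 | hA | hB
      · simp only [Finset.mem_singleton]
        exact Fin.ext (by rw [ty_eq_zero] at h0; exact h0)
      · exact absurd ((hC a1 u (by rw [tya1, hA])).2 hu) h1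
      · exact absurd ((hC a2 u (by rw [tya2, hB])).2 hu) h2
    by_cases hc : (star p q).sat (Function.update σ v aC) φ
    · have hcQ : (star p' q').sat (Function.update τ v bC) φ :=
        (hC aC bC (by rw [tyaC, tybC])).1 hc
      have e1 : (Finset.univ.filter fun a =>
          (star p q).sat (Function.update σ v a) φ) = {aC} :=
        Finset.Subset.antisymm hsubP (by
          intro u hu
          simp only [Finset.mem_singleton] at hu
          subst hu
          simp only [Finset.mem_filter, Finset.mem_univ, true_and]
          exact hc)
      have e2 : (Finset.univ.filter fun a =>
          (star p' q').sat (Function.update τ v a) φ) = {bC} :=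
        Finset.Subset.antisymm hsubQ (by
          intro u hu
          simp only [Finset.mem_singleton] at hu
          subst hu
          simp only [Finset.mem_filter, Finset.mem_univ, true_and]
          exact hcQ)
      rw [e1, e2, Finset.card_singleton, Finset.card_singleton]
    · have hcQ : ¬ (star p' q').sat (Function.update τ v bC) φ :=
        fun hx => hc ((hC aC bC (by rw [tyaC, tybC])).2 hx)
      have e1 : (Finset.univ.filter fun a =>
          (star p q).sat (Function.update σ v a) φ) = ∅ := by
        apply Finset.eq_empty_of_forall_notMem
        intro u hu
        have := Finset.mem_singleton.1 (hsubP hu)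
        subst this
        simp only [Finset.mem_filter, Finset.mem_univ, true_and] at hu
        exact hc hu
      have e2 : (Finset.univ.filter fun a =>
          (star p' q').sat (Function.update τ v a) φ) = ∅ := by
        apply Finset.eq_empty_of_forall_notMem
        intro u hu
        have := Finset.mem_singleton.1 (hsubQ hu)
        subst this
        simp only [Finset.mem_filter, Finset.mem_univ, true_and] at hu
        exact hcQ hu
      rw [e1, e2, Finset.card_empty, Finset.card_empty]

def maxT : FOC2 Empty Bool → ℕ
  | .tru => 0
  | .atom _ _ => 0
  | .rel _ _ _ => 0
  | .and φ ψ => max (maxT φ) (maxT ψ)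
  | .or φ ψ => max (maxT φ) (maxT ψ)
  | .not φ => maxT φ
  | .exge n _ φ => max n (maxT φ)

lemma thresholdsLe_of_maxT_le : ∀ (φ : FOC2 Empty Bool) (m : ℕ),
    maxT φ ≤ m → φ.thresholdsLe m := by
  intro φ
  induction φ with
  | tru => intro m _; trivial
  | atom _ _ => intro m _; trivial
  | rel _ _ _ => intro m _; trivial
  | and φ ψ ih1 ih2 =>
    intro m h; simp only [maxT, max_le_iff] at h
    exact ⟨ih1 m h.1, ih2 m h.2⟩
  | or φ ψ ih1 ih2 =>
    intro m h; simp only [maxT, max_le_iff] at h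
    exact ⟨ih1 m h.1, ih2 m h.2⟩
  | not φ ih => intro m h; exact ih m h
  | exge n v φ ih =>
    intro m h; simp only [maxT, max_le_iff] at h
    exact ⟨h.1, ih m h.2⟩

/-- No `FOC2` formula expresses "strictly more r1-neighbours than r2-neighbours" on all
star graphs `G(n)`, `H(n)`; indeed any candidate with thresholds at most `m` cannot
distinguish the centres of `G(m)` and `H(m)`, though only the former satisfies the
property. -/
theorem stmt6 :
    (¬ ∃ φ : FOC2 Empty Bool, φ.freeVars ⊆ {Var.x} ∧
      ∀ n : ℕ,
        (∀ v : (star (2 * n + 1) (2 * n)).V,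
          (star (2 * n + 1) (2 * n)).sat (fun _ => v) φ ↔
            nbrCount (star (2 * n + 1) (2 * n)) false v
              < nbrCount (star (2 * n + 1) (2 * n)) true v) ∧
        (∀ v : (star (2 * n) (2 * n + 1)).V,
          (star (2 * n) (2 * n + 1)).sat (fun _ => v) φ ↔
            nbrCount (star (2 * n) (2 * n + 1)) false v
              < nbrCount (star (2 * n) (2 * n + 1)) true v)) ∧
    (∀ (m : ℕ) (φ : FOC2 Empty Bool), φ.thresholdsLe m →
        (((star (2 * m + 1) (2 * m)).sat (fun _ => starCenter (2 * m + 1) (2 * m)) φ ↔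
          (star (2 * m) (2 * m + 1)).sat (fun _ => starCenter (2 * m) (2 * m + 1)) φ))) ∧
    (∀ m : ℕ,
      nbrCount (star (2 * m + 1) (2 * m)) false (starCenter (2 * m + 1) (2 * m))
        < nbrCount (star (2 * m + 1) (2 * m)) true (starCenter (2 * m + 1) (2 * m)) ∧
      ¬ (nbrCount (star (2 * m) (2 * m + 1)) false (starCenter (2 * m) (2 * m + 1))
        < nbrCount (star (2 * m) (2 * m + 1)) true (starCenter (2 * m) (2 * m + 1)))) := by
  have part2 : ∀ (m : ℕ) (φ : FOC2 Empty Bool), φ.thresholdsLe m →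
      (((star (2 * m + 1) (2 * m)).sat (fun _ => starCenter (2 * m + 1) (2 * m)) φ ↔
        (star (2 * m) (2 * m + 1)).sat (fun _ => starCenter (2 * m) (2 * m + 1)) φ)) := by
    intro m φ hφ
    exact key m φ hφ (2 * m + 1) (2 * m) (2 * m) (2 * m + 1)
      (by omega) (by omega) (by omega) (by omega) _ _
      (fun v => by simp [starCenter, ty])
  have part3 : ∀ m : ℕ,
      nbrCount (star (2 * m + 1) (2 * m)) false (starCenter (2 * m + 1) (2 * m))
        < nbrCount (star (2 * m + 1) (2 * m)) true (starCenter (2 * m + 1) (2 * m)) ∧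
      ¬ (nbrCount (star (2 * m) (2 * m + 1)) false (starCenter (2 * m) (2 * m + 1))
        < nbrCount (star (2 * m) (2 * m + 1)) true (starCenter (2 * m) (2 * m + 1))) := by
    intro m
    rw [nbrCount_center_false, nbrCount_center_true,
      nbrCount_center_false, nbrCount_center_true]
    omega
  refine ⟨?_, part2, part3⟩
  rintro ⟨φ, -, h⟩
  have hiff := part2 (maxT φ) φ (thresholdsLe_of_maxT_le φ (maxT φ) le_rfl)
  have hG := ((h (maxT φ)).1 (starCenter _ _)).2 (part3 (maxT φ)).1
  exact (part3 (maxT φ)).2 (((h (maxT φ)).2 (starCenter _ _)).1 (hiff.1 hG))
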